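/- Let α₁, α₂, α₃ be three pairwise distinct complex roots of the polynomial X⁶ − 2. Then there exist integers b₁, b₂, b₃ ∈ {−1, 0, 1}, not all zero, such that b₁·α₁ + b₂·α₂ + b₃·α₃ = 0. -/
import Mathlib

lemma key_sixth_roots (u v : ℂ) (hu : u ^ 6 = 1) (hv : v ^ 6 = 1)
    (hu1 : u ≠ 1) (hv1 : v ≠ 1) (huv : u ≠ v) :
    ∃ b₁ b₂ b₃ : ℤ, b₁ ∈ ({-1, 0, 1} : Set ℤ) ∧ b₂ ∈ ({-1, 0, 1} : Set ℤ) ∧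
      b₃ ∈ ({-1, 0, 1} : Set ℤ) ∧ ¬ (b₁ = 0 ∧ b₂ = 0 ∧ b₃ = 0) ∧
      (b₁ : ℂ) + (b₂ : ℂ) * u + (b₃ : ℂ) * v = 0 := by
  have fu : (u - 1) * ((u + 1) * ((u ^ 2 + u + 1) * (u ^ 2 - u + 1))) = 0 := by
    linear_combination hu
  have fv : (v - 1) * ((v + 1) * ((v ^ 2 + v + 1) * (v ^ 2 - v + 1))) = 0 := by
    linear_combination hv
  rcases mul_eq_zero.mp fu with hu' | fu
  · exact absurd (sub_eq_zero.mp hu') hu1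
  rcases mul_eq_zero.mp fu with hu' | fu
  · -- u = -1
    exact ⟨1, 1, 0, by norm_num, by norm_num, by norm_num, by norm_num,
      by push_cast; linear_combination hu'⟩
  rcases mul_eq_zero.mp fv with hv' | fv
  · exact absurd (sub_eq_zero.mp hv') hv1
  rcases mul_eq_zero.mp fv with hv' | fv
  · -- v = -1
    exact ⟨1, 0, 1, by norm_num, by norm_num, by norm_num, by norm_num,
      by push_cast; linear_combination hv'⟩
  by_cases hnv : v = -u
  · exact ⟨0, 1, 1, by norm_num, by norm_num, by norm_num, by norm_num,
      by push_cast; rw [hnv]; ring⟩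
  have hsub : u - v ≠ 0 := sub_ne_zero.mpr huv
  have hadd : v + u ≠ 0 := fun h => hnv (by linear_combination h)
  rcases mul_eq_zero.mp fu with qu | qu <;> rcases mul_eq_zero.mp fv with qv | qv
  · -- u²+u+1=0, v²+v+1=0 : 1+u+v=0
    have h0 : (u + v + 1) * (u - v) = 0 := by linear_combination qu - qv
    have h1 : u + v + 1 = 0 := by
      rcases mul_eq_zero.mp h0 with h | h
      · exact h
      · exact absurd h hsub
    exact ⟨1, 1, 1, by norm_num, by norm_num, by norm_num, by norm_num,
      by push_cast; linear_combination h1⟩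
  · -- u²+u+1=0, v²-v+1=0 : 1+u-v=0
    have h0 : (v - u - 1) * (v + u) = 0 := by linear_combination qv - qu
    have h1 : v - u - 1 = 0 := by
      rcases mul_eq_zero.mp h0 with h | h
      · exact h
      · exact absurd h hadd
    exact ⟨1, 1, -1, by norm_num, by norm_num, by norm_num, by norm_num,
      by push_cast; linear_combination -h1⟩
  · -- u²-u+1=0, v²+v+1=0 : -1+u-v=0
    have h0 : (u - v - 1) * (u + v) = 0 := by linear_combination qu - qv
    have h1 : u - v - 1 = 0 := by
      rcases mul_eq_zero.mp h0 with h | h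
      · exact h
      · exact absurd (by linear_combination h) hadd
    exact ⟨-1, 1, -1, by norm_num, by norm_num, by norm_num, by norm_num,
      by push_cast; linear_combination h1⟩
  · -- u²-u+1=0, v²-v+1=0 : -1+u+v=0
    have h0 : (u + v - 1) * (u - v) = 0 := by linear_combination qu - qv
    have h1 : u + v - 1 = 0 := by
      rcases mul_eq_zero.mp h0 with h | h
      · exact h
      · exact absurd h hsub
    exact ⟨-1, 1, 1, by norm_num, by norm_num, by norm_num, by norm_num,
      by push_cast; linear_combination h1⟩

theorem zero_sum_roots_X_pow_six_sub_two (α₁ α₂ α₃ : ℂ)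
    (h₁ : Polynomial.aeval α₁ ((Polynomial.X : Polynomial ℤ) ^ 6 - 2) = 0)
    (h₂ : Polynomial.aeval α₂ ((Polynomial.X : Polynomial ℤ) ^ 6 - 2) = 0)
    (h₃ : Polynomial.aeval α₃ ((Polynomial.X : Polynomial ℤ) ^ 6 - 2) = 0)
    (h₁₂ : α₁ ≠ α₂) (h₁₃ : α₁ ≠ α₃) (h₂₃ : α₂ ≠ α₃) :
    ∃ b₁ b₂ b₃ : ℤ, b₁ ∈ ({-1, 0, 1} : Set ℤ) ∧ b₂ ∈ ({-1, 0, 1} : Set ℤ) ∧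
      b₃ ∈ ({-1, 0, 1} : Set ℤ) ∧ ¬ (b₁ = 0 ∧ b₂ = 0 ∧ b₃ = 0) ∧
      (b₁ : ℂ) * α₁ + (b₂ : ℂ) * α₂ + (b₃ : ℂ) * α₃ = 0 := by
  simp only [map_sub, map_pow, Polynomial.aeval_X, map_ofNat, sub_eq_zero] at h₁ h₂ h₃
  have hα₁ : α₁ ≠ 0 := by
    intro h; rw [h] at h₁; norm_num at h₁
  set u : ℂ := α₂ / α₁ with hu_def
  set v : ℂ := α₃ / α₁ with hv_def
  have hu : u ^ 6 = 1 := by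
    rw [hu_def, div_pow, h₂, h₁, div_self (by norm_num)]
  have hv : v ^ 6 = 1 := by
    rw [hv_def, div_pow, h₃, h₁, div_self (by norm_num)]
  have hu1 : u ≠ 1 := by
    rw [hu_def]; intro h
    exact h₁₂ ((div_eq_one_iff_eq hα₁).mp h).symm
  have hv1 : v ≠ 1 := by
    rw [hv_def]; intro h
    exact h₁₃ ((div_eq_one_iff_eq hα₁).mp h).symm
  have huv : u ≠ v := by
    rw [hu_def, hv_def]; intro h
    exact h₂₃ (div_left_inj' hα₁ |>.mp h)
  obtain ⟨b₁, b₂, b₃, m₁, m₂, m₃, hnz, heq⟩ := key_sixth_roots u v hu hv hu1 hv1 huv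
  refine ⟨b₁, b₂, b₃, m₁, m₂, m₃, hnz, ?_⟩
  have hα₂ : α₂ = u * α₁ := by rw [hu_def]; field_simp
  have hα₃ : α₃ = v * α₁ := by rw [hv_def]; field_simp
  rw [hα₂, hα₃]
  linear_combination α₁ * heq
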